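/- Let x̄ ∈ K ∩ ℤⁿ and let 1 ≤ k ≤ n. The image of Q(x̄) under the orthogonal projection ℝⁿ → ℝᵏ onto the first k coordinates equals Q(x̄_{[k]}), where x̄_{[k]} := (x̄₁,…,x̄_k) ∈ ℝᵏ and Q(x̄_{[k]}) is the convex hull in ℝᵏ of {y ∈ ℤᵏ : y_i ≥ 0 for all i, y ⪰ x̄_{[k]}} with ⪯ the lexicographic order on ℝᵏ. -/
import Mathlib


/-- Lexicographic strict order on `Fin n → ℝ` associated with the standard basis. -/
def lexLt {n : ℕ} (x y : Fin n → ℝ) : Prop :=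
  ∃ i : Fin n, x i < y i ∧ ∀ j : Fin n, j < i → x j = y j

/-- `x ⪯ y` iff `x ≺ y` or `x = y`. -/
def lexLe {n : ℕ} (x y : Fin n → ℝ) : Prop := lexLt x y ∨ x = y

/-- Membership in the cone `K = ℝⁿ₊` (here stated for any dimension). -/
def inK {n : ℕ} (x : Fin n → ℝ) : Prop := ∀ i, 0 ≤ x i

/-- `x` is an integer point. -/
def isInt {n : ℕ} (x : Fin n → ℝ) : Prop := ∀ i, ∃ z : ℤ, x i = (z : ℝ)

/-- `Q(x̄) = conv {x ∈ K ∩ ℤⁿ : x ⪰ x̄}` (in any dimension). -/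
def Q {n : ℕ} (xb : Fin n → ℝ) : Set (Fin n → ℝ) :=
  convexHull ℝ {x | inK x ∧ isInt x ∧ lexLe xb x}

/-- For `x̄ ∈ K ∩ ℤⁿ` and `1 ≤ k ≤ n`, the image of `Q(x̄)` under the orthogonal
projection onto the first `k` coordinates equals `Q(x̄_{[k]})`, where
`x̄_{[k]} = (x̄₁, …, x̄ₖ) ∈ ℝᵏ`. -/
theorem stmt7 {n k : ℕ} (hk1 : 1 ≤ k) (hkn : k ≤ n)
    (xb : Fin n → ℝ) (hK : inK xb) (hI : isInt xb) :
    (fun x : Fin n → ℝ => fun i : Fin k => x (Fin.castLE hkn i)) '' Q xb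
      = Q (fun i : Fin k => xb (Fin.castLE hkn i)) := by
  have hπ : (fun x : Fin n → ℝ => fun i : Fin k => x (Fin.castLE hkn i))
      = (LinearMap.funLeft ℝ ℝ (Fin.castLE hkn) : (Fin n → ℝ) →ₗ[ℝ] (Fin k → ℝ)) := rfl
  rw [hπ, Q, LinearMap.image_convexHull]
  congr 1
  ext y
  constructor
  · rintro ⟨x, ⟨hxK, hxI, hxL⟩, rfl⟩
    refine ⟨fun i => hxK _, fun i => hxI _, ?_⟩
    rcases hxL with ⟨i, hlt, hprev⟩ | rfl
    · by_cases hik : (i : ℕ) < k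
      · left
        refine ⟨⟨i, hik⟩, ?_, ?_⟩
        · have : Fin.castLE hkn (⟨(i : ℕ), hik⟩ : Fin k) = i := by
            apply Fin.ext; rfl
          simpa [LinearMap.funLeft, this] using hlt
        · intro j hj
          have : Fin.castLE hkn j < i := by
            simpa [Fin.lt_def] using hj
          exact hprev _ this
      · right
        funext j
        have : Fin.castLE hkn j < i := by
          simp only [Fin.lt_def, Fin.coe_castLE]
          exact lt_of_lt_of_le j.isLt (le_of_not_gt hik)
        exact hprev _ this
    · right; rfl
  · rintro ⟨hyK, hyI, hyL⟩
    rcases hyL with ⟨i, hlt, hprev⟩ | rfl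
    · refine ⟨fun j => if h : (j : ℕ) < k then y ⟨(j : ℕ), h⟩ else 0, ⟨?_, ?_, ?_⟩, ?_⟩
      · intro j; dsimp only; split
        · exact hyK _
        · exact le_refl _
      · intro j; dsimp only; split
        · exact hyI _
        · exact ⟨0, by simp⟩
      · left
        refine ⟨Fin.castLE hkn i, ?_, ?_⟩
        · have h1 : ((Fin.castLE hkn i : Fin n) : ℕ) < k := i.isLt
          have h2 : (⟨((Fin.castLE hkn i : Fin n) : ℕ), h1⟩ : Fin k) = i := by
            apply Fin.ext; rfl
          simp only [dif_pos h1, h2]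
          exact hlt
        · intro j hj
          have hjk : (j : ℕ) < k := by
            have : (j : ℕ) < (i : ℕ) := by simpa [Fin.lt_def] using hj
            exact this.trans i.isLt
          have h2 : Fin.castLE hkn (⟨(j : ℕ), hjk⟩ : Fin k) = j := by
            apply Fin.ext; rfl
          have h3 : (⟨(j : ℕ), hjk⟩ : Fin k) < i := by
            simpa [Fin.lt_def] using hj
          simp only [dif_pos hjk]
          have := hprev _ h3
          simpa [h2] using this
      · funext j
        have h1 : ((Fin.castLE hkn j : Fin n) : ℕ) < k := j.isLt
        have h2 : (⟨((Fin.castLE hkn j : Fin n) : ℕ), h1⟩ : Fin k) = j := by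
          apply Fin.ext; rfl
        simp [LinearMap.funLeft, dif_pos h1, h2]
    · exact ⟨xb, ⟨hK, hI, Or.inr rfl⟩, rfl⟩
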